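/- Let ρ be a positive semidefinite matrix with trace 1 indexed by (Fin 4 × Fin n) × (Fin 4 × Fin n), and let ρ_B be its partial trace over the first factor, i.e. ρ_B(j,j') = Σ_{i∈Fin 4} ρ((i,j),(i,j')). Let B be an n×n complex matrix. If ρ_B is positive definite and both (A₀ ⊗ B)·ρ = ρ and (A₀³ ⊗ Bᴴ)·ρ = ρ hold, then B·Bᴴ = 𝟙 and Bᴴ·B = 𝟙, i.e. B is unitary. -/

import Mathlib

open Matrix
open scoped ComplexOrder Kronecker

/-- The four Bell states `φ₁, φ₂, φ₃, φ₄` in `ℂ² ⊗ ℂ²` (indexed by `Fin 2 × Fin 2`). -/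
noncomputable def bell : Fin 4 → (Fin 2 × Fin 2 → ℂ) := fun k x =>
  (if k = 0 then (if x = (0, 0) then 1 else if x = (1, 1) then 1 else 0)
   else if k = 1 then (if x = (0, 0) then 1 else if x = (1, 1) then -1 else 0)
   else if k = 2 then (if x = (0, 1) then 1 else if x = (1, 0) then 1 else 0)
   else (if x = (0, 1) then 1 else if x = (1, 0) then -1 else 0)) / (Real.sqrt 2 : ℂ)

/-- The trusted party's observable `A₀ = Σ_{k=0}^{3} i^k |φ_{k+1}⟩⟨φ_{k+1}|`. -/
noncomputable def A0 : Matrix (Fin 2 × Fin 2) (Fin 2 × Fin 2) ℂ :=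
  ∑ k : Fin 4, Complex.I ^ (k : ℕ) • Matrix.vecMulVec (bell k) (star (bell k))

noncomputable def M : Matrix (Fin 2 × Fin 2) (Fin 2 × Fin 2) ℂ := Matrix.of fun x y =>
  if x = (0,0) ∧ y = (0,0) then (1+Complex.I)/2
  else if x = (0,0) ∧ y = (1,1) then (1-Complex.I)/2
  else if x = (1,1) ∧ y = (0,0) then (1-Complex.I)/2
  else if x = (1,1) ∧ y = (1,1) then (1+Complex.I)/2
  else if x = (0,1) ∧ y = (0,1) then (-1-Complex.I)/2
  else if x = (0,1) ∧ y = (1,0) then (-1+Complex.I)/2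
  else if x = (1,0) ∧ y = (0,1) then (-1+Complex.I)/2
  else if x = (1,0) ∧ y = (1,0) then (-1-Complex.I)/2
  else 0

lemma A0_eq : A0 = M := by
  have hs : (Real.sqrt 2 : ℂ) ≠ 0 := by
    norm_num [Complex.ofReal_ne_zero, Real.sqrt_eq_zero']
  have h2 : (Real.sqrt 2 : ℂ) * (Real.sqrt 2 : ℂ) = 2 := by
    rw [← Complex.ofReal_mul, Real.mul_self_sqrt (by norm_num)]; norm_num
  have h2sq : (Real.sqrt 2 : ℂ) ^ 2 = 2 := by rw [sq, h2]
  have h3v : Complex.I ^ ((3:Fin 4):ℕ) = -Complex.I := by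
    rw [show ((3:Fin 4):ℕ) = 3 from rfl]; simp [pow_succ]
  ext x y
  simp only [A0, M, Matrix.sum_apply, Matrix.smul_apply, Matrix.vecMulVec_apply,
    Fin.sum_univ_four, bell, Pi.star_apply]
  fin_cases x <;> fin_cases y <;>
    (simp [Prod.ext_iff, h3v]; try field_simp; try rw [h2]) <;>
    norm_num [Complex.ext_iff, h2sq]

noncomputable def S : Matrix (Fin 2 × Fin 2) (Fin 2 × Fin 2) ℂ := Matrix.of fun x y =>
  if x = (0,0) ∧ y = (1,1) then 1 else if x = (1,1) ∧ y = (0,0) then 1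
  else if x = (0,1) ∧ y = (1,0) then 1 else if x = (1,0) ∧ y = (0,1) then (1:ℂ) else 0

lemma M_sq : M * M = S := by
  ext x y
  rw [Matrix.mul_apply]
  rw [Fintype.sum_prod_type]
  simp only [Fin.sum_univ_two]
  fin_cases x <;> fin_cases y <;> simp [M, S, Prod.ext_iff] <;> ring_nf <;>
    norm_num [Complex.ext_iff]

lemma S_sq : S * S = 1 := by
  ext x y
  rw [Matrix.mul_apply, Fintype.sum_prod_type]
  simp only [Fin.sum_univ_two]
  fin_cases x <;> fin_cases y <;> simp [S, Matrix.one_apply, Prod.ext_iff]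

lemma A0_pow4 : A0 ^ 4 = 1 := by
  have : A0 ^ 4 = (A0 * A0) * (A0 * A0) := by rw [pow_succ, pow_succ, pow_succ, pow_one]; noncomm_ring
  rw [this, A0_eq, M_sq, S_sq]

/-- if `ρ` is PSD with trace 1, its partial trace over the first (four
dimensional) factor is positive definite, and `(A₀ ⊗ B)·ρ = ρ` and `(A₀³ ⊗ Bᴴ)·ρ = ρ`,
then `B` is unitary. -/
theorem stmt1 {n : ℕ}
    (ρ : Matrix ((Fin 2 × Fin 2) × Fin n) ((Fin 2 × Fin 2) × Fin n) ℂ)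
    (B : Matrix (Fin n) (Fin n) ℂ)
    (hρ : ρ.PosSemidef) (htr : ρ.trace = 1)
    (hρB : (Matrix.of fun j j' : Fin n => ∑ i : Fin 2 × Fin 2, ρ (i, j) (i, j')).PosDef)
    (h1 : (A0 ⊗ₖ B) * ρ = ρ)
    (h3 : ((A0 ^ 3) ⊗ₖ Bᴴ) * ρ = ρ) :
    B * Bᴴ = 1 ∧ Bᴴ * B = 1 := by

  set ρB : Matrix (Fin n) (Fin n) ℂ :=
    Matrix.of fun j j' : Fin n => ∑ i : Fin 2 × Fin 2, ρ (i, j) (i, j') with hρBdef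
  have key : ∀ Mx : Matrix (Fin n) (Fin n) ℂ,
      ((1 : Matrix (Fin 2 × Fin 2) (Fin 2 × Fin 2) ℂ) ⊗ₖ Mx) * ρ = ρ → Mx = 1 := by
    intro Mx h
    have hM : Mx * ρB = ρB := by
      ext j j'
      have step : ∀ i : Fin 2 × Fin 2,
          ρ (i, j) (i, j') = ∑ j'' : Fin n, Mx j j'' * ρ (i, j'') (i, j') := by
        intro i
        conv_lhs => rw [← h]
        rw [Matrix.mul_apply, Fintype.sum_prod_type]
        simp [Matrix.kroneckerMap_apply, Matrix.one_apply, ite_mul,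
          Finset.sum_ite_eq, Finset.mem_univ]
      calc (Mx * ρB) j j' = ∑ j'' : Fin n, Mx j j'' * ∑ i : Fin 2 × Fin 2, ρ (i, j'') (i, j') := by
              simp [Matrix.mul_apply, hρBdef]
        _ = ∑ i : Fin 2 × Fin 2, ∑ j'' : Fin n, Mx j j'' * ρ (i, j'') (i, j') := by
              rw [Finset.sum_comm]; simp [Finset.mul_sum]
        _ = ∑ i : Fin 2 × Fin 2, ρ (i, j) (i, j') := by
              refine Finset.sum_congr rfl fun i _ => (step i).symm
        _ = ρB j j' := rfl
    have hU : IsUnit ρB := hρB.isUnit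
    have : Mx * ρB = 1 * ρB := by rw [one_mul, hM]
    exact hU.mul_right_cancel this
  constructor
  · apply key
    have : ((A0 ⊗ₖ B) * ((A0 ^ 3) ⊗ₖ Bᴴ)) * ρ = ρ := by rw [mul_assoc, h3, h1]
    rwa [← Matrix.mul_kronecker_mul, show A0 * A0 ^ 3 = A0 ^ 4 by rw [← pow_succ'], A0_pow4] at this
  · apply key
    have : (((A0 ^ 3) ⊗ₖ Bᴴ) * (A0 ⊗ₖ B)) * ρ = ρ := by rw [mul_assoc, h1, h3]
    rwa [← Matrix.mul_kronecker_mul, show A0 ^ 3 * A0 = A0 ^ 4 by rw [← pow_succ], A0_pow4] at this
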